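/- arXiv:1805.11451 — 5 statements merged into one kernel-verified Lean document; each statement's English description precedes it below -/
import Mathlib

section
/- Let R be a ring in which every additive commutator lies in the center, let p be a prime and n ≥ 1, and let b ∈ R satisfy pⁿ·b = 0. Then b^(pⁿ) lies in the center of R. -/
theorem pow_central_of_commutators_central {R : Type*} [Ring R]
    (h : ∀ a b : R, a * b - b * a ∈ Subring.center R)
    (p n : ℕ) (hp : p.Prime) (hn : 1 ≤ n) (b : R) (hb : (p ^ n) • b = 0) :
    b ^ (p ^ n) ∈ Subring.center R := by
  rw [Subring.mem_center_iff]
  intro a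
  have key : ∀ k : ℕ, a * b ^ (k + 1) - b ^ (k + 1) * a
      = (k + 1) • ((a * b - b * a) * b ^ k) := by
    intro k
    induction k with
    | zero => simp
    | succ k ih =>
      have hc : b ^ (k + 1) * (a * b - b * a) = (a * b - b * a) * b ^ (k + 1) :=
        Subring.mem_center_iff.mp (h a b) _
      have e1 : a * b ^ (k + 1) = b ^ (k + 1) * a + (k + 1) • ((a * b - b * a) * b ^ k) := by
        rw [← ih]; abel
      have e3 : b ^ (k + 1) * (a * b) =
          (a * b - b * a) * b ^ (k + 1) + b ^ (k + 1) * b * a := by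
        rw [← hc, mul_assoc, ← mul_add, sub_add_cancel]
      calc a * b ^ (k + 1 + 1) - b ^ (k + 1 + 1) * a
          = (b ^ (k + 1) * a + (k + 1) • ((a * b - b * a) * b ^ k)) * b
              - b ^ (k + 1) * b * a := by
            rw [pow_succ, ← mul_assoc, e1]
        _ = b ^ (k + 1) * (a * b) + (k + 1) • ((a * b - b * a) * b ^ (k + 1))
              - b ^ (k + 1) * b * a := by
            rw [add_mul, smul_mul_assoc, mul_assoc (b ^ (k + 1)) a b,
              mul_assoc (a * b - b * a) (b ^ k) b, ← pow_succ]
        _ = (a * b - b * a) * b ^ (k + 1) + b ^ (k + 1) * b * a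
              + (k + 1) • ((a * b - b * a) * b ^ (k + 1)) - b ^ (k + 1) * b * a := by
            rw [e3]
        _ = (k + 1) • ((a * b - b * a) * b ^ (k + 1))
              + (a * b - b * a) * b ^ (k + 1) := by abel
        _ = (k + 1 + 1) • ((a * b - b * a) * b ^ (k + 1)) := (succ_nsmul _ _).symm
  have hm : 2 ≤ p ^ n := by
    calc 2 ≤ p := hp.two_le
    _ ≤ p ^ n := Nat.le_self_pow (by omega) p
  obtain ⟨m, hmeq⟩ : ∃ m, p ^ n = m + 2 := ⟨p ^ n - 2, by omega⟩
  have hkey := key (m + 1)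
  rw [show m + 1 + 1 = p ^ n by omega] at hkey
  have hz : (p ^ n) • ((a * b - b * a) * b ^ (m + 1)) = 0 := by
    rw [pow_succ, ← mul_assoc, ← mul_smul_comm, hb, mul_zero]
  rw [hz] at hkey
  exact sub_eq_zero.mp hkey
end

section
/- Let R be a finite ring in which every nilpotent element is central. Then R is commutative. -/
universe u

section Aux

variable {R : Type u} [Ring R]

lemma nilp_comm (h : ∀ x : R, IsNilpotent x → x ∈ Subring.center R)
    {x : R} (hx : IsNilpotent x) (g : R) : x * g = g * x :=
  ((Subring.mem_center_iff.mp (h x hx)) g).symm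

lemma idem_central (h : ∀ x : R, IsNilpotent x → x ∈ Subring.center R)
    {e : R} (he : e * e = e) (x : R) : e * x = x * e := by
  have key : ∀ y : R, y * y = 0 → ∀ g, y * g = g * y := fun y hy g =>
    nilp_comm h ⟨2, by rw [pow_two, hy]⟩ g
  -- first: e * x = e * x * e
  have hea : e * (e * x - e * x * e) = e * x - e * x * e := by
    simp only [mul_sub, ← mul_assoc, he]
  have hae : (e * x - e * x * e) * e = 0 := by
    have h2 : e * x * e * e = e * x * e := by rw [mul_assoc (e * x) e e, he]
    rw [sub_mul, h2, sub_self]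
  have ha2 : (e * x - e * x * e) * (e * x - e * x * e) = 0 := by
    have h3 : e * x * e * (e * x - e * x * e) = e * x * (e * x - e * x * e) := by
      rw [mul_assoc (e * x) e _, hea]
    rw [sub_mul, h3, sub_self]
  have hA : e * x - e * x * e = 0 := by
    have := key _ ha2 e
    rw [hae, hea] at this
    exact this.symm
  -- second: x * e = e * x * e
  have heb : e * (x * e - e * x * e) = 0 := by
    simp only [mul_sub, ← mul_assoc, he, sub_self]
  have hbe : (x * e - e * x * e) * e = x * e - e * x * e := by
    simp only [sub_mul, mul_assoc, he]
  have hb2 : (x * e - e * x * e) * (x * e - e * x * e) = 0 := by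
    have h4 : x * e * (x * e - e * x * e) = x * (e * (x * e - e * x * e)) := by
      rw [mul_assoc]
    have h5 : e * x * e * (x * e - e * x * e) = e * x * (e * (x * e - e * x * e)) := by
      rw [mul_assoc (e * x) e _]
    rw [sub_mul, h4, h5, heb, mul_zero, mul_zero, sub_self]
  have hB : x * e - e * x * e = 0 := by
    have := key _ hb2 e
    rw [hbe, heb] at this
    exact this
  have h1 : e * x = e * x * e := sub_eq_zero.mp hA
  have h2 : x * e = e * x * e := sub_eq_zero.mp hB
  rw [h1, h2]

lemma exists_pow_idem [Fintype R] (a : R) :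
    ∃ k : ℕ, 1 ≤ k ∧ a ^ k * a ^ k = a ^ k := by
  have base : ∀ i j : ℕ, i < j → a ^ i = a ^ j → ∃ k, 1 ≤ k ∧ a ^ k * a ^ k = a ^ k := by
    intro i j hlt heq
    set d := j - i with hd
    have hd1 : 1 ≤ d := by omega
    have hstep : ∀ l, i ≤ l → a ^ (l + d) = a ^ l := by
      intro l hl
      have h1 : l + d = (l - i) + j := by omega
      have h2 : (l - i) + i = l := by omega
      rw [h1, pow_add, ← heq, ← pow_add, h2]
    have hmul : ∀ m : ℕ, a ^ (i * d + d + m * d) = a ^ (i * d + d) := by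
      intro m
      induction m with
      | zero => simp
      | succ t ih =>
        have h6 : i * d + d + (t + 1) * d = (i * d + d + t * d) + d := by ring
        have h7 : i ≤ i * d + d + t * d := by
          have : i * 1 ≤ i * d := Nat.mul_le_mul_left i hd1
          omega
        rw [h6, hstep _ h7, ih]
    refine ⟨i * d + d, by omega, ?_⟩
    rw [← pow_add]
    have h8 : (i * d + d) + (i * d + d) = i * d + d + (i + 1) * d := by ring
    rw [h8, hmul (i + 1)]
  obtain ⟨i, j, hij, hpow⟩ : ∃ i j : ℕ, i ≠ j ∧ a ^ i = a ^ j := by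
    obtain ⟨i, j, hij, hpow⟩ := Finite.exists_ne_map_eq_of_infinite (fun n : ℕ => a ^ n)
    exact ⟨i, j, hij, hpow⟩
  rcases hij.lt_or_gt with hl | hl
  · exact base i j hl hpow
  · exact base j i hl hpow.symm

lemma comm_deriv (a v c : R) (hc : a * v - v * a = c)
    (hcen : ∀ g : R, c * g = g * c) :
    ∀ k : ℕ, a * v ^ (k + 1) - v ^ (k + 1) * a = (k + 1) • (v ^ k * c) := by
  intro k
  induction k with
  | zero => simpa using hc
  | succ t ih =>
    have ih' : a * v ^ (t + 1) = v ^ (t + 1) * a + (t + 1) • (v ^ t * c) := by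
      rw [← ih]; abel
    have hav : a * v = v * a + c := by rw [← hc]; abel
    have hcv : c * v = v * c := hcen v
    have e1 : a * v ^ (t + 1 + 1) = (v ^ (t + 1) * a + (t + 1) • (v ^ t * c)) * v := by
      rw [pow_succ, ← mul_assoc, ih']
    have e2 : (v ^ (t + 1) * a + (t + 1) • (v ^ t * c)) * v
        = v ^ (t + 1) * (a * v) + (t + 1) • (v ^ (t + 1) * c) := by
      rw [add_mul, mul_assoc (v ^ (t+1)) a v, smul_mul_assoc, mul_assoc (v ^ t) c v, hcv,
          ← mul_assoc (v ^ t) v c, ← pow_succ]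
    have e3 : v ^ (t + 1) * (a * v) = v ^ (t + 1 + 1) * a + v ^ (t + 1) * c := by
      rw [hav, mul_add, ← mul_assoc, ← pow_succ]
    rw [e1, e2, e3, succ_nsmul ((v ^ (t + 1) * c)) (t + 1)]
    abel

end Aux

section Aux2

variable {R : Type u} [Ring R]

/-- congruence modulo the central element `(p : R)` -/
def pCon (p : ℕ) : RingCon R where
  r := fun g k => ∃ r : R, g - k = (p : R) * r
  iseqv := ⟨fun g => ⟨0, by simp⟩,
    fun {g k} hgk => by
      obtain ⟨r, hr⟩ := hgk
      exact ⟨-r, by rw [mul_neg, ← hr]; abel⟩,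
    fun {g k l} h1 h2 => by
      obtain ⟨r, hr⟩ := h1; obtain ⟨s, hs⟩ := h2
      exact ⟨r + s, by rw [mul_add, ← hr, ← hs]; abel⟩⟩
  add' := fun {g k g' k'} h1 h2 => by
    obtain ⟨r, hr⟩ := h1; obtain ⟨s, hs⟩ := h2
    exact ⟨r + s, by rw [mul_add, ← hr, ← hs]; abel⟩
  mul' := fun {g k g' k'} h1 h2 => by
    obtain ⟨r, hr⟩ := h1; obtain ⟨s, hs⟩ := h2
    refine ⟨r * g' + k * s, ?_⟩
    have hcom : k * (p : R) = (p : R) * k := ((p : ℕ).cast_commute k).eq.symm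
    calc g * g' - k * k' = (g - k) * g' + k * (g' - k') := by noncomm_ring
      _ = (p : R) * r * g' + k * ((p : R) * s) := by rw [hr, hs]
      _ = (p : R) * (r * g' + k * s) := by
          rw [mul_add, mul_assoc, ← mul_assoc k, hcom, mul_assoc]

lemma isNilpotent_sub_one [Nontrivial R] (p τ α : ℕ) (hp : p.Prime)
    [hchar : CharP R (p ^ τ)] (x : R) (hx : x ^ p ^ α = 1) :
    IsNilpotent (x - 1) := by
  haveI : Fact p.Prime := ⟨hp⟩
  set J : RingCon R := pCon p with hJ
  haveI : CharP J.Quotient p := by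
    constructor
    intro q
    constructor
    · intro hq
      have hq' : J (q : R) 0 := by
        rw [← RingCon.coe_natCast J q] at hq
        rw [show (0 : J.Quotient) = ((0 : R) : J.Quotient) from (RingCon.coe_zero J).symm] at hq
        exact (RingCon.eq J).mp hq
      obtain ⟨r, hr⟩ := hq'
      rw [sub_zero] at hr
      by_contra hpq
      have hcop : Nat.Coprime p q := (Nat.Prime.coprime_iff_not_dvd hp).mpr hpq
      obtain ⟨A, B, hAB⟩ : IsCoprime (p : ℤ) (q : ℤ) := Nat.isCoprime_iff_coprime.mpr hcop
      have h1R : (1 : R) = (p : R) * ((A : R) + (B : R) * r) := by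
        have hcast : (A : R) * (p : R) + (B : R) * (q : R) = 1 := by
          have := congrArg (fun z : ℤ => (z : R)) hAB
          push_cast at this
          exact this
        have hAp : (A : R) * (p : R) = (p : R) * (A : R) :=
          (((p : ℕ).cast_commute ((A : ℤ) : R)).eq).symm
        have hBpr : (B : R) * ((p : R) * r) = (p : R) * ((B : R) * r) := by
          rw [← mul_assoc, (((p : ℕ).cast_commute ((B : ℤ) : R)).eq).symm, mul_assoc]
        calc (1 : R) = (A : R) * (p : R) + (B : R) * (q : R) := hcast.symm
          _ = (p : R) * (A : R) + (B : R) * ((p : R) * r) := by rw [hAp, hr]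
          _ = (p : R) * (A : R) + (p : R) * ((B : R) * r) := by rw [hBpr]
          _ = (p : R) * ((A : R) + (B : R) * r) := (mul_add _ _ _).symm
      have h10 : (1 : R) = 0 := by
        have h2 := congrArg (fun z => z ^ τ) h1R
        simp only [one_pow] at h2
        rw [(((p : ℕ)).cast_commute ((A : R) + (B : R) * r)).mul_pow τ] at h2
        have h3 : ((p : R)) ^ τ = 0 := by
          have := CharP.cast_eq_zero R (p ^ τ)
          rwa [Nat.cast_pow] at this
        rw [h3, zero_mul] at h2
        exact h2
      exact one_ne_zero h10
    · rintro ⟨d, hd⟩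
      have : J (q : R) 0 := ⟨(d : R), by rw [sub_zero, hd]; push_cast; ring⟩
      calc (q : J.Quotient) = ((q : R) : J.Quotient) := (RingCon.coe_natCast J q).symm
        _ = ((0 : R) : J.Quotient) := (RingCon.eq J).mpr this
        _ = 0 := RingCon.coe_zero J
  have hmk : (((x - 1 : R) : J.Quotient)) ^ p ^ α = 0 := by
    rw [RingCon.coe_sub]
    rw [sub_pow_char_pow_of_commute p α (Commute.one_right _)]
    rw [RingCon.coe_one, one_pow, ← RingCon.coe_pow, hx, RingCon.coe_one, sub_self]
  have hrel : J ((x - 1) ^ p ^ α) 0 := by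
    rw [← RingCon.coe_pow] at hmk
    rw [show (0 : J.Quotient) = ((0 : R) : J.Quotient) from (RingCon.coe_zero J).symm] at hmk
    exact (RingCon.eq J).mp hmk
  obtain ⟨r, hr⟩ := hrel
  rw [sub_zero] at hr
  refine ⟨p ^ α * τ, ?_⟩
  rw [pow_mul, hr, ((p : ℕ).cast_commute r).mul_pow τ]
  have h3 : ((p : R)) ^ τ = 0 := by
    have := CharP.cast_eq_zero R (p ^ τ)
    rwa [Nat.cast_pow] at this
  rw [h3, zero_mul]

end Aux2
section Aux3

variable {R : Type u} [Ring R]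

lemma idem_mul_pow (f g : R) (hf : f * f = f) (hfc : ∀ x : R, f * x = x * f) :
    ∀ m : ℕ, (f * g) ^ (m + 1) = f * g ^ (m + 1) := by
  intro m
  induction m with
  | zero => simp
  | succ t ih =>
    calc (f * g) ^ (t + 1 + 1) = (f * g) ^ (t + 1) * (f * g) := pow_succ _ _
      _ = (f * g ^ (t + 1)) * (f * g) := by rw [ih]
      _ = f * (g ^ (t + 1) * (f * g)) := mul_assoc _ _ _
      _ = f * ((g ^ (t + 1) * f) * g) := by rw [mul_assoc]
      _ = f * ((f * g ^ (t + 1)) * g) := by rw [hfc (g ^ (t + 1))]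
      _ = f * (f * (g ^ (t + 1) * g)) := by rw [mul_assoc]
      _ = (f * f) * (g ^ (t + 1) * g) := (mul_assoc _ _ _).symm
      _ = f * g ^ (t + 1 + 1) := by rw [hf, ← pow_succ]

end Aux3

theorem aux : ∀ (n : ℕ) (R : Type u) [Ring R] [Fintype R],
    (∀ x : R, IsNilpotent x → x ∈ Subring.center R) → Fintype.card R ≤ n →
    ∀ a b : R, a * b = b * a := by
  intro n
  induction n with
  | zero =>
    intro R _ _ _ hcard
    have := Fintype.card_pos (α := R)
    omega
  | succ n IH =>
    intro R _ _ h hcard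
    by_cases hss : Subsingleton R
    · exact fun a b => Subsingleton.elim _ _
    haveI : Nontrivial R := not_subsingleton_iff_nontrivial.mp hss
    classical
    by_cases hidem : ∃ e : R, e * e = e ∧ e ≠ 0 ∧ e ≠ 1
    · -- inductive step: split by a nontrivial central idempotent
      obtain ⟨e, he, he0, he1⟩ := hidem
      have main : ∀ f : R, f * f = f → f ≠ 1 →
          ∀ a b : R, f * (a * b) = f * (b * a) := by
        intro f hf hf1 a b
        have hfc : ∀ x : R, f * x = x * f := idem_central h hf
        let C : RingCon R := {
          r := fun x y => f * x = f * y
          iseqv := ⟨fun x => rfl, Eq.symm, Eq.trans⟩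
          add' := fun {w x y z} h1 h2 => by
            show f * (w + y) = f * (x + z)
            rw [mul_add, mul_add, h1, h2]
          mul' := fun {w x y z} h1 h2 => by
            show f * (w * y) = f * (x * z)
            calc f * (w * y) = (f * w) * y := (mul_assoc f w y).symm
              _ = (f * x) * y := by rw [h1]
              _ = (x * f) * y := by rw [hfc x]
              _ = x * (f * y) := mul_assoc x f y
              _ = x * (f * z) := by rw [h2]
              _ = (x * f) * z := (mul_assoc x f z).symm
              _ = (f * x) * z := by rw [← hfc x]
              _ = f * (x * z) := mul_assoc f x z }
        have hsurj : Function.Surjective (fun x : R => (x : C.Quotient)) := fun q =>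
          Quotient.inductionOn' q (fun g => ⟨g, rfl⟩)
        letI : DecidableEq C.Quotient := Classical.decEq _
        letI : Fintype C.Quotient := Fintype.ofSurjective _ hsurj
        have hninj : ¬ Function.Injective (fun x : R => (x : C.Quotient)) := by
          intro hinj
          have hrel : C (1 - f) 0 := by
            show f * (1 - f) = f * 0
            rw [mul_sub, mul_one, hf, mul_zero, sub_self]
          have h10 := hinj ((RingCon.eq C).mpr hrel)
          simp only [sub_eq_zero] at h10
          exact hf1 h10.symm
        have hcard' : Fintype.card C.Quotient ≤ n := by
          have := Fintype.card_lt_of_surjective_not_injective _ hsurj hninj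
          omega
        have hQ : ∀ q : C.Quotient, IsNilpotent q → q ∈ Subring.center C.Quotient := by
          intro q hq
          obtain ⟨g, rfl⟩ := hsurj q
          obtain ⟨m, hm⟩ := hq
          rcases m with _ | m'
          · rw [pow_zero] at hm
            have hall : ∀ w : C.Quotient, w = 0 := fun w => by
              calc w = w * 1 := (mul_one w).symm
                _ = w * 0 := by rw [hm]
                _ = 0 := mul_zero w
            refine Subring.mem_center_iff.mpr fun z => ?_
            exact (hall _).trans (hall _).symm
          · have hrel : C (g ^ (m' + 1)) 0 :=
              (RingCon.eq C).mp (by rw [RingCon.coe_pow, hm, RingCon.coe_zero])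
            have hfg : f * g ^ (m' + 1) = 0 := by
              have h5 : f * (g ^ (m' + 1)) = f * 0 := hrel
              rwa [mul_zero] at h5
            have hnil : IsNilpotent (f * g) :=
              ⟨m' + 1, by rw [idem_mul_pow f g hf hfc m', hfg]⟩
            have hcent := nilp_comm h hnil
            have hgq : ((g : C.Quotient)) = ((f * g : R) : C.Quotient) :=
              (RingCon.eq C).mpr (by show f * g = f * (f * g); rw [← mul_assoc, hf])
            refine Subring.mem_center_iff.mpr fun z => ?_
            obtain ⟨w, rfl⟩ := hsurj z
            show ((w : C.Quotient)) * ((g : R) : C.Quotient)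
              = ((g : R) : C.Quotient) * ((w : C.Quotient))
            rw [hgq, ← RingCon.coe_mul, ← RingCon.coe_mul]
            exact congrArg _ (hcent w).symm
        have hcommQ := IH C.Quotient hQ hcard' (a : C.Quotient) (b : C.Quotient)
        rw [← RingCon.coe_mul, ← RingCon.coe_mul] at hcommQ
        exact (RingCon.eq C).mp hcommQ
      intro a b
      have hf2 : (1 - e) * (1 - e) = (1 - e) := by
        rw [sub_mul, one_mul, mul_sub, mul_one, he]
        abel
      have h1e1 : (1 : R) - e ≠ 1 := fun hh => he0 (sub_eq_self.mp hh)
      have h1 := main e he he1 a b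
      have h2 := main (1 - e) hf2 h1e1 a b
      have hsplit : ∀ x : R, e * x + (1 - e) * x = x := fun x => by
        rw [← add_mul, add_sub_cancel, one_mul]
      calc a * b = e * (a * b) + (1 - e) * (a * b) := (hsplit _).symm
        _ = e * (b * a) + (1 - e) * (b * a) := by rw [h1, h2]
        _ = b * a := hsplit _
    · -- base case : no nontrivial idempotents
      push_neg at hidem
      have unit_or_nilp : ∀ x : R, IsNilpotent x ∨ IsUnit x := by
        intro x
        obtain ⟨k, hk1, hkid⟩ := exists_pow_idem x
        by_cases hz : x ^ k = 0
        · exact Or.inl ⟨k, hz⟩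
        · have h1 : x ^ k = 1 := hidem _ hkid hz
          have hk' : k - 1 + 1 = k := by omega
          refine Or.inr ⟨⟨x, x ^ (k - 1), ?_, ?_⟩, rfl⟩
          · calc x * x ^ (k - 1) = x ^ (k - 1 + 1) := (pow_succ' x (k - 1)).symm
              _ = 1 := by rw [hk', h1]
          · calc x ^ (k - 1) * x = x ^ (k - 1 + 1) := (pow_succ x (k - 1)).symm
              _ = 1 := by rw [hk', h1]
      -- commutators are nilpotent
      have hcommnil : ∀ g k : R, IsNilpotent (g * k - k * g) := by
        let N : RingCon R := {
          r := fun x y => IsNilpotent (x - y)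
          iseqv := ⟨fun x => by simp,
            fun {x y} hxy => by
              have := hxy.neg
              rwa [neg_sub] at this,
            fun {x y z} h1 h2 => by
              have h3 : Commute (x - y) (y - z) := nilp_comm h h1 (y - z)
              have h4 := h3.isNilpotent_add h1 h2
              rwa [sub_add_sub_cancel] at h4⟩
          add' := fun {w x y z} h1 h2 => by
            show IsNilpotent ((w + y) - (x + z))
            have h3 : Commute (w - x) (y - z) := nilp_comm h h1 (y - z)
            have h4 := h3.isNilpotent_add h1 h2
            have h5 : (w - x) + (y - z) = (w + y) - (x + z) := by abel
            rwa [h5] at h4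
          mul' := fun {w x y z} h1 h2 => by
            show IsNilpotent (w * y - x * z)
            have n1 : IsNilpotent ((w - x) * y) :=
              Commute.isNilpotent_mul_right (nilp_comm h h1 y) h1
            have n2 : IsNilpotent (x * (y - z)) :=
              Commute.isNilpotent_mul_left ((nilp_comm h h2 x).symm) h2
            have h3 : Commute ((w - x) * y) (x * (y - z)) := nilp_comm h n1 _
            have h4 := h3.isNilpotent_add n1 n2
            have h5 : (w - x) * y + x * (y - z) = w * y - x * z := by noncomm_ring
            rwa [h5] at h4 }
        have hsurj : Function.Surjective (fun x : R => (x : N.Quotient)) := fun q =>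
          Quotient.inductionOn' q (fun g => ⟨g, rfl⟩)
        letI : DecidableEq N.Quotient := Classical.decEq _
        letI : Fintype N.Quotient := Fintype.ofSurjective _ hsurj
        have hzero : ∀ x : R, ((x : N.Quotient) = 0 ↔ IsNilpotent x) := by
          intro x
          constructor
          · intro hx
            have h6 : N x 0 := (RingCon.eq N).mp (by rw [hx, RingCon.coe_zero])
            have h7 : IsNilpotent (x - 0) := h6
            simpa using h7
          · intro hx
            calc (x : N.Quotient) = ((0 : R) : N.Quotient) :=
                (RingCon.eq N).mpr (show IsNilpotent (x - 0) by simpa using hx)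
              _ = 0 := RingCon.coe_zero N
        haveI : Nontrivial N.Quotient := by
          refine ⟨⟨(1 : R), 0, fun h10 => ?_⟩⟩
          have h11 := (hzero 1).mp (by rw [RingCon.coe_one]; exact h10)
          obtain ⟨m, hm⟩ := h11
          rw [one_pow] at hm
          exact one_ne_zero hm
        haveI : NoZeroDivisors N.Quotient := by
          refine ⟨@fun q1 q2 hq => ?_⟩
          revert hq
          refine Quotient.inductionOn₂' q1 q2 (fun g k hq => ?_)
          have hgk : IsNilpotent (g * k) := by
            have : ((g * k : R) : N.Quotient) = 0 := by
              rw [RingCon.coe_mul]; exact hq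
            exact (hzero _).mp this
          rcases unit_or_nilp g with hg | hg
          · exact Or.inl ((hzero g).mpr hg)
          rcases unit_or_nilp k with hk | hk
          · exact Or.inr ((hzero k).mpr hk)
          exfalso
          obtain ⟨m, hm⟩ := hgk
          have := (hg.mul hk).pow m
          rw [hm] at this
          exact this.ne_zero rfl
        haveI : IsDomain N.Quotient := NoZeroDivisors.to_isDomain _
        letI : DivisionRing N.Quotient := Fintype.divisionRingOfIsDomain _
        letI : Field N.Quotient := littleWedderburn _
        intro g k
        refine (hzero _).mp ?_
        rw [RingCon.coe_sub, RingCon.coe_mul, RingCon.coe_mul,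
          mul_comm ((g : N.Quotient)) ((k : N.Quotient)), sub_self]
      -- characteristic is a prime power
      have hn0 : ringChar R ≠ 0 := CharP.char_ne_zero_of_finite R (ringChar R)
      have hn1 : ringChar R ≠ 1 := CharP.char_ne_one R (ringChar R)
      obtain ⟨p, hp, hpd⟩ := Nat.exists_prime_and_dvd hn1
      set τ := (ringChar R).factorization p with hτdef
      have hτpos : 0 < τ := hp.factorization_pos_of_dvd hn0 hpd
      set t := ringChar R / p ^ τ with htdef
      have hst : p ^ τ * t = ringChar R := Nat.ordProj_mul_ordCompl_eq_self (ringChar R) p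
      have hco : Nat.Coprime (p ^ τ) t :=
        Nat.Coprime.pow_left _ (Nat.coprime_ordCompl hp hn0)
      have ht1 : t = 1 := by
        by_contra ht
        have hs1 : p ^ τ ≠ 1 := by
          have := Nat.one_lt_pow (by omega : τ ≠ 0) hp.one_lt
          omega
        obtain ⟨ε, hε1, hε2⟩ := Nat.chineseRemainder hco 1 0
        have hEE : ((ε : R)) * ((ε : R)) = (ε : R) := by
          have hmod : (ε * ε) ≡ ε [MOD ringChar R] := by
            rw [← hst]
            refine (Nat.modEq_and_modEq_iff_modEq_mul hco).mp ⟨?_, ?_⟩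
            · exact (hε1.mul hε1).trans
                (show (1 * 1 : ℕ) ≡ ε [MOD p ^ τ] by simpa using hε1.symm)
            · exact (hε2.mul hε2).trans
                (show (0 * 0 : ℕ) ≡ ε [MOD t] by simpa using hε2.symm)
          calc ((ε : R)) * ((ε : R)) = ((ε * ε : ℕ) : R) := by push_cast; ring
            _ = (ε : R) := CharP.natCast_eq_natCast' R (ringChar R) hmod
        have hE0 : (ε : R) ≠ 0 := by
          intro h0
          have hdvd : ringChar R ∣ ε := (CharP.cast_eq_zero_iff R (ringChar R) ε).mp h0
          have hdvd2 : p ^ τ ∣ ε := dvd_trans ⟨t, hst.symm⟩ hdvd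
          have h8 : (0 : ℕ) ≡ 1 [MOD p ^ τ] :=
            ((Nat.modEq_zero_iff_dvd).mpr hdvd2).symm.trans hε1
          have h9 : p ^ τ ∣ 1 := by
            simpa using (Nat.modEq_iff_dvd' (Nat.zero_le 1)).mp h8
          exact hs1 (Nat.dvd_one.mp h9)
        have hE1 : (ε : R) ≠ 1 := by
          intro h0
          have hmod1 : ε ≡ 1 [MOD ringChar R] := by
            refine (CharP.natCast_eq_natCast R (ringChar R)).mp ?_
            rw [Nat.cast_one, h0]
          have hdvdt : t ∣ ringChar R := ⟨p ^ τ, by rw [← hst]; ring⟩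
          have hmodt : ε ≡ 1 [MOD t] := hmod1.of_dvd hdvdt
          have h8 : (0 : ℕ) ≡ 1 [MOD t] := hε2.symm.trans hmodt
          have h9 : t ∣ 1 := by
            simpa using (Nat.modEq_iff_dvd' (Nat.zero_le 1)).mp h8
          exact ht (Nat.dvd_one.mp h9)
        exact hE1 (hidem _ hEE hE0)
      have hchar : ringChar R = p ^ τ := by rw [← hst, ht1, mul_one]
      haveI hCRp : CharP R (p ^ τ) := hchar ▸ ringChar.charP R
      -- main computation
      intro a b
      rcases unit_or_nilp b with hbn | hbu
      · exact (nilp_comm h hbn a).symm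
      obtain ⟨u, hu⟩ := hbu
      have hm0 : orderOf u ≠ 0 := (orderOf_pos u).ne'
      set m := orderOf u with hmdef
      set β := m.factorization p with hβdef
      set t' := m / p ^ β with ht'def
      have hmst : p ^ β * t' = m := Nat.ordProj_mul_ordCompl_eq_self m p
      have hpt' : ¬ p ∣ t' := Nat.not_dvd_ordCompl hp hm0
      have hco2 : Nat.Coprime (p ^ β) t' :=
        Nat.Coprime.pow_left _ (Nat.coprime_ordCompl hp hm0)
      obtain ⟨A, B, hAB⟩ : IsCoprime ((p ^ β : ℕ) : ℤ) ((t' : ℕ) : ℤ) :=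
        Nat.isCoprime_iff_coprime.mpr hco2
      set x := u ^ ((B : ℤ) * (t' : ℤ)) with hxdef
      set y := u ^ ((A : ℤ) * ((p ^ β : ℕ) : ℤ)) with hydef
      have hxy : x * y = u := by
        rw [hxdef, hydef, ← zpow_add]
        have hexp : (B : ℤ) * (t' : ℤ) + (A : ℤ) * ((p ^ β : ℕ) : ℤ) = 1 := by linarith
        rw [hexp, zpow_one]
      have hxs : x ^ (p ^ β) = 1 := by
        rw [hxdef, ← zpow_natCast (u ^ ((B : ℤ) * (t' : ℤ))) (p ^ β), ← zpow_mul]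
        have hexp : (B : ℤ) * (t' : ℤ) * ((p ^ β : ℕ) : ℤ) = (m : ℤ) * B := by
          push_cast [← hmst]; ring
        rw [hexp, zpow_mul, zpow_natCast, pow_orderOf_eq_one, one_zpow]
      have hyt : y ^ t' = 1 := by
        rw [hydef, ← zpow_natCast (u ^ ((A : ℤ) * ((p ^ β : ℕ) : ℤ))) t', ← zpow_mul]
        have hexp : (A : ℤ) * ((p ^ β : ℕ) : ℤ) * (t' : ℤ) = (m : ℤ) * A := by
          push_cast [← hmst]; ring
        rw [hexp, zpow_mul, zpow_natCast, pow_orderOf_eq_one, one_zpow]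
      have hxR : ((x : R)) ^ (p ^ β) = 1 := by
        rw [← Units.val_pow_eq_pow_val, hxs, Units.val_one]
      have hyR : ((y : R)) ^ t' = 1 := by
        rw [← Units.val_pow_eq_pow_val, hyt, Units.val_one]
      have hνnil : IsNilpotent ((x : R) - 1) := isNilpotent_sub_one p τ β hp (x : R) hxR
      have hν := nilp_comm h hνnil
      set v : R := (y : R) with hvdef
      have hbv : b = v + ((x : R) - 1) * v := by
        rw [← hu, ← hxy, Units.val_mul, hvdef]
        noncomm_ring
      have hwnil : IsNilpotent (((x : R) - 1) * v) :=
        Commute.isNilpotent_mul_right (hν v) hνnil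
      have hwc := nilp_comm h hwnil
      set c' := a * v - v * a with hc'def
      have hc'nil : IsNilpotent c' := hcommnil a v
      have hc'c := nilp_comm h hc'nil
      have ht'0 : t' ≠ 0 := by
        intro h0
        rw [h0, mul_zero] at hmst
        exact hm0 hmst.symm
      have hder := comm_deriv a v c' hc'def.symm hc'c t'
      have hvt : v ^ (t' + 1) = v := by rw [pow_succ, hyR, one_mul]
      rw [hvt, hyR, one_mul] at hder
      have ht'c : t' • c' = 0 := by
        have h12 : c' = (t' + 1) • c' := by rw [hc'def]; exact hder
        rw [succ_nsmul] at h12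
        exact add_eq_right.mp h12.symm
      have hcharc : (p ^ τ) • c' = 0 := by
        rw [nsmul_eq_mul, CharP.cast_eq_zero R (p ^ τ), zero_mul]
      have hcop3 : Nat.Coprime t' (p ^ τ) :=
        Nat.Coprime.pow_right τ ((Nat.Prime.coprime_iff_not_dvd hp).mpr hpt').symm
      obtain ⟨A', B', hAB'⟩ : IsCoprime ((t' : ℕ) : ℤ) ((p ^ τ : ℕ) : ℤ) :=
        Nat.isCoprime_iff_coprime.mpr hcop3
      have hc'0 : c' = 0 := by
        calc c' = ((1 : ℤ)) • c' := (one_zsmul c').symm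
          _ = ((A' * (t' : ℤ) + B' * ((p ^ τ : ℕ) : ℤ))) • c' := by rw [hAB']
          _ = A' • ((t' : ℤ) • c') + B' • (((p ^ τ : ℕ) : ℤ) • c') := by
              rw [add_zsmul, mul_zsmul, mul_zsmul]
          _ = 0 := by
              rw [natCast_zsmul, natCast_zsmul, ht'c, hcharc, smul_zero, smul_zero, add_zero]
      have hav : a * v = v * a := sub_eq_zero.mp (hc'def.symm.trans hc'0)
      calc a * b = a * v + a * (((x : R) - 1) * v) := by rw [hbv, mul_add]
        _ = v * a + (((x : R) - 1) * v) * a := by rw [hav, (hwc a).symm]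
        _ = (v + ((x : R) - 1) * v) * a := (add_mul _ _ _).symm
        _ = b * a := by rw [← hbv]

theorem finite_ring_comm_of_nilpotents_central {R : Type*} [Ring R] [Fintype R]
    (h : ∀ x : R, IsNilpotent x → x ∈ Subring.center R) :
    ∀ a b : R, a * b = b * a :=
  aux (Fintype.card R) R h le_rfl
end

section
/- Let R be a finite ring in which every nilpotent element is central. Then the additive commutator ab − ba is central for all a, b ∈ R (i.e., [R,R] ⊆ Z(R)) whenever R has no nontrivial idempotents, since R modulo its nilradical is a field and hence commutative. -/
section Aux

variable {R : Type*} [Ring R]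

private lemma aux_comm (hnil : ∀ x : R, IsNilpotent x → x ∈ Subring.center R)
    {x : R} (hx : IsNilpotent x) (y : R) : Commute x y :=
  ((Subring.mem_center_iff.mp (hnil x hx)) y).symm

private lemma aux_mul_left (hnil : ∀ x : R, IsNilpotent x → x ∈ Subring.center R)
    {x : R} (y : R) (hx : IsNilpotent x) : IsNilpotent (x * y) :=
  (aux_comm hnil hx y).isNilpotent_mul_right hx

private lemma aux_mul_right (hnil : ∀ x : R, IsNilpotent x → x ∈ Subring.center R)
    {x : R} (y : R) (hx : IsNilpotent x) : IsNilpotent (y * x) :=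
  ((aux_comm hnil hx y).symm).isNilpotent_mul_left hx

private lemma aux_add (hnil : ∀ x : R, IsNilpotent x → x ∈ Subring.center R)
    {x y : R} (hx : IsNilpotent x) (hy : IsNilpotent y) : IsNilpotent (x + y) :=
  (aux_comm hnil hx y).isNilpotent_add hx hy

private lemma exists_pow_idem_s9 [Finite R] (x : R) :
    ∃ n, 0 < n ∧ x ^ n * x ^ n = x ^ n := by
  obtain ⟨i, j, hij, h⟩ := Finite.exists_ne_map_eq_of_infinite (fun k : ℕ => x ^ k)
  wlog hlt : i < j generalizing i j
  · exact this j i hij.symm h.symm (by omega)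
  obtain ⟨d, rfl⟩ : ∃ d, j = i + d := ⟨j - i, by omega⟩
  have hd : 0 < d := by omega
  have h' : x ^ (i + d) = x ^ i := h.symm
  have key : ∀ k j, i ≤ j → x ^ (j + k * d) = x ^ j := by
    intro k
    induction k with
    | zero => simp
    | succ k ih =>
      intro j hj
      have : j + (k + 1) * d = (j + d) + k * d := by ring
      rw [this, ih (j + d) (by omega)]
      obtain ⟨e, rfl⟩ : ∃ e, j = i + e := ⟨j - i, by omega⟩
      calc x ^ (i + e + d) = x ^ (i + d) * x ^ e := by rw [← pow_add]; ring_nf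
        _ = x ^ i * x ^ e := by rw [h']
        _ = x ^ (i + e) := by rw [← pow_add]
  refine ⟨(i + d) * d, by positivity, ?_⟩
  rw [← pow_add]
  have hle : i ≤ (i + d) * d := by nlinarith
  exact key (i + d) ((i + d) * d) hle

private lemma nilp_or_unit [Finite R]
    (hidem : ∀ e : R, e * e = e → e = 0 ∨ e = 1) (x : R) :
    IsNilpotent x ∨ IsUnit x := by
  obtain ⟨n, hn, h⟩ := exists_pow_idem_s9 x
  rcases hidem _ h with h0 | h1
  · exact Or.inl ⟨n, h0⟩
  · exact Or.inr (IsUnit.of_pow_eq_one h1 hn.ne')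

end Aux

theorem commutators_central_of_nilpotents_central {R : Type*} [Ring R] [Fintype R]
    (hnil : ∀ x : R, IsNilpotent x → x ∈ Subring.center R)
    (hidem : ∀ e : R, e * e = e → e = 0 ∨ e = 1) :
    ∀ a b : R, a * b - b * a ∈ Subring.center R := by
  intro a b
  rcases subsingleton_or_nontrivial R with hs | hs
  · exact Subring.mem_center_iff.mpr fun g => Subsingleton.elim _ _
  set c : RingCon R :=
    { r := fun x y => IsNilpotent (x - y)
      iseqv := ⟨fun x => by simp,
        fun {x y} h => by rw [← neg_sub]; exact h.neg,
        fun {x y z} h1 h2 => by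
          have : x - z = (x - y) + (y - z) := by abel
          rw [this]; exact aux_add hnil h1 h2⟩
      mul' := fun {w x y z} h1 h2 => by
        show IsNilpotent (w * y - x * z)
        have : w * y - x * z = w * (y - z) + (w - x) * z := by noncomm_ring
        rw [this]
        exact aux_add hnil (aux_mul_right hnil w h2) (aux_mul_left hnil z h1)
      add' := fun {w x y z} h1 h2 => by
        show IsNilpotent (w + y - (x + z))
        have : w + y - (x + z) = (w - x) + (y - z) := by abel
        rw [this]; exact aux_add hnil h1 h2 } with hc
  haveI : Finite c.Quotient :=
    Finite.of_surjective (fun r : R => (r : c.Quotient))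
      (fun x => Quot.inductionOn x fun r => ⟨r, rfl⟩)
  haveI : Nontrivial c.Quotient := by
    refine ⟨0, 1, fun h => ?_⟩
    rw [← RingCon.coe_zero, ← RingCon.coe_one, RingCon.eq] at h
    have h1 : IsNilpotent (1 : R) := by
      have : IsNilpotent ((0 : R) - 1) := h
      simpa using this.neg
    obtain ⟨n, hn⟩ := h1
    simp only [one_pow] at hn
    exact one_ne_zero hn
  haveI : NoZeroDivisors c.Quotient := by
    refine ⟨fun {x y} h => ?_⟩
    obtain ⟨a, rfl⟩ : ∃ r : R, (r : c.Quotient) = x := Quot.inductionOn x fun r => ⟨r, rfl⟩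
    obtain ⟨b, rfl⟩ : ∃ r : R, (r : c.Quotient) = y := Quot.inductionOn y fun r => ⟨r, rfl⟩
    rw [← RingCon.coe_mul, ← RingCon.coe_zero, RingCon.eq] at h
    have hab : IsNilpotent (a * b) := by
      have h' : IsNilpotent (a * b - 0) := h
      rwa [sub_zero] at h'
    rcases nilp_or_unit hidem a with ha | ha
    · left
      rw [← RingCon.coe_zero, RingCon.eq]
      show IsNilpotent (a - 0)
      rwa [sub_zero]
    · right
      rw [← RingCon.coe_zero, RingCon.eq]
      obtain ⟨u, rfl⟩ := ha
      have : IsNilpotent ((↑u⁻¹ : R) * (↑u * b)) := aux_mul_right hnil _ hab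
      rw [Units.inv_mul_cancel_left] at this
      show IsNilpotent (b - 0)
      rwa [sub_zero]
  haveI : IsDomain c.Quotient := NoZeroDivisors.to_isDomain _
  have hf := Finite.isDomain_to_isField c.Quotient
  have hcomm := hf.mul_comm (a : c.Quotient) (b : c.Quotient)
  rw [← RingCon.coe_mul, ← RingCon.coe_mul, RingCon.eq] at hcomm
  exact hnil _ hcomm
end

section
/- Let R be a finite ring such that every x ∈ R satisfies x^(n(x)) = x for some integer n(x) > 1 (depending on x). Then R is commutative. -/
section Aux

variable {R : Type*} [Ring R]

/-- In a ring satisfying `x^n = x`, squares of zero are zero. -/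
lemma jac_reduced (h : ∀ x : R, ∃ n : ℕ, 1 < n ∧ x ^ n = x) :
    ∀ x : R, x * x = 0 → x = 0 := by
  intro x hx
  obtain ⟨n, hn, hxn⟩ := h x
  have : x ^ n = 0 := by
    obtain ⟨m, rfl⟩ : ∃ m, n = m + 2 := ⟨n - 2, by omega⟩
    rw [pow_add, pow_two, hx, mul_zero]
  rw [hxn] at this; exact this

/-- Idempotents are central in a reduced ring. -/
lemma jac_idem_central (h : ∀ x : R, ∃ n : ℕ, 1 < n ∧ x ^ n = x)
    {e : R} (he : e * e = e) : ∀ x : R, e * x = x * e := by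
  intro x
  have h1e : (1 - e) * e = 0 := by rw [sub_mul, one_mul, he, sub_self]
  have he1 : e * (1 - e) = 0 := by rw [mul_sub, mul_one, he, sub_self]
  have h1 : e * x * (1 - e) = 0 := by
    apply jac_reduced h
    have : (e * x * (1 - e)) * (e * x * (1 - e))
        = e * x * ((1 - e) * e) * (x * (1 - e)) := by noncomm_ring
    rw [this, h1e, mul_zero, zero_mul]
  have h2 : (1 - e) * x * e = 0 := by
    apply jac_reduced h
    have : ((1 - e) * x * e) * ((1 - e) * x * e)
        = (1 - e) * x * (e * (1 - e)) * (x * e) := by noncomm_ring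
    rw [this, he1, mul_zero, zero_mul]
  have e1 : e * x - e * x * e = 0 := by
    rw [← h1]; noncomm_ring
  have e2 : x * e - e * x * e = 0 := by
    rw [← h2]; noncomm_ring
  rw [sub_eq_zero.mp e1, sub_eq_zero.mp e2]

/-- The congruence "equal after multiplying by the central idempotent f". -/
def jacCon (f : R) (hc : ∀ x : R, f * x = x * f) : RingCon R where
  r x y := x * f = y * f
  iseqv := ⟨fun _ => rfl, Eq.symm, Eq.trans⟩
  add' := by
    intro a b c d h1 h2
    show (a + c) * f = (b + d) * f
    rw [add_mul, add_mul, show a * f = b * f from h1, show c * f = d * f from h2]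
  mul' := by
    intro a b c d h1 h2
    show a * c * f = b * d * f
    calc a * c * f = a * (c * f) := by rw [mul_assoc]
      _ = a * (d * f) := by rw [show c * f = d * f from h2]
      _ = a * (f * d) := by rw [hc d]
      _ = a * f * d := by rw [mul_assoc]
      _ = b * f * d := by rw [show a * f = b * f from h1]
      _ = b * (f * d) := by rw [mul_assoc]
      _ = b * (d * f) := by rw [hc d]
      _ = b * d * f := by rw [mul_assoc]

lemma jac_aux : ∀ (N : ℕ) (R : Type u) [Ring R] [Fintype R], Fintype.card R ≤ N →
    (∀ x : R, ∃ n : ℕ, 1 < n ∧ x ^ n = x) → ∀ a b : R, a * b = b * a := by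
  intro N
  induction N with
  | zero => intro R _ _ hcard _; exact absurd hcard (by simp [Fintype.card_pos.ne'])
  | succ N ih =>
    intro R _ _ hcard h a b
    classical
    by_cases hss : Subsingleton R
    · exact Subsingleton.elim _ _
    have : Nontrivial R := not_subsingleton_iff_nontrivial.mp hss
    by_cases hid : ∃ e : R, e * e = e ∧ e ≠ 0 ∧ e ≠ 1
    · -- split using a nontrivial central idempotent
      obtain ⟨e, he, he0, he1⟩ := hid
      have hec := jac_idem_central h he
      -- the two idempotents e and 1 - e
      have key : ∀ (f : R), f * f = f → f ≠ 0 → f ≠ 1 → (∀ x, f * x = x * f) →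
          (a * b) * f = (b * a) * f := by
        intro f hf hf0 hf1 hfc
        set c := jacCon f hfc with hc
        have hsurj : Function.Surjective (c.mk') := Quot.mk_surjective
        have : Finite c.Quotient := Finite.of_surjective _ hsurj
        have : Fintype c.Quotient := Fintype.ofFinite _
        have hninj : ¬ Function.Injective (c.mk') := by
          intro hinj
          have h10 : c.mk' (1 - f) = c.mk' 0 := by
            change ((1 - f : R) : c.Quotient) = ((0 : R) : c.Quotient)
            rw [RingCon.eq]
            show (1 - f) * f = 0 * f
            rw [sub_mul, one_mul, hf, sub_self, zero_mul]
          have := hinj h10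
          rw [sub_eq_zero] at this
          exact hf1 this.symm
        have hlt : Fintype.card c.Quotient < Fintype.card R :=
          Fintype.card_lt_of_surjective_not_injective _ hsurj hninj
        have hq : ∀ y : c.Quotient, ∃ n : ℕ, 1 < n ∧ y ^ n = y := by
          intro y
          obtain ⟨x, rfl⟩ := hsurj y
          obtain ⟨n, hn, hx⟩ := h x
          exact ⟨n, hn, by rw [← map_pow, hx]⟩
        have hcomm := ih c.Quotient (by omega) hq (c.mk' a) (c.mk' b)
        rw [← map_mul, ← map_mul] at hcomm
        exact (RingCon.eq c).mp hcomm
      have hfe : (1 - e) * (1 - e) = 1 - e := by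
        have : (1 - e) * (1 - e) = 1 - e - e + e * e := by noncomm_ring
        rw [this, he]; noncomm_ring
      have hfec : ∀ x : R, (1 - e) * x = x * (1 - e) := by
        intro x
        have := hec x
        calc (1 - e) * x = x - e * x := by noncomm_ring
          _ = x - x * e := by rw [this]
          _ = x * (1 - e) := by noncomm_ring
      have k1 := key e he he0 he1 hec
      have k2 := key (1 - e) hfe (by
          intro h0; apply he1; rw [sub_eq_zero] at h0; exact h0.symm)
        (by intro h1; apply he0; exact sub_eq_self.mp h1) hfec
      calc a * b = (a * b) * e + (a * b) * (1 - e) := by noncomm_ring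
        _ = (b * a) * e + (b * a) * (1 - e) := by rw [k1, k2]
        _ = b * a := by noncomm_ring
    · -- no nontrivial idempotents: R is a domain, hence a field by little Wedderburn
      push_neg at hid
      have : NoZeroDivisors R := by
        constructor
        intro x y hxy
        by_cases hx : x = 0
        · left; exact hx
        right
        obtain ⟨n, hn, hxn⟩ := h x
        have hidem : x ^ (n-1) * x ^ (n-1) = x ^ (n-1) := by
          rw [← pow_add]
          obtain ⟨m, rfl⟩ : ∃ m, n = m + 2 := ⟨n - 2, by omega⟩
          show x ^ (m + 1 + (m + 1)) = x ^ (m + 1)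
          calc x ^ (m + 1 + (m + 1)) = x ^ (m + 2) * x ^ m := by rw [← pow_add]; ring_nf
            _ = x * x ^ m := by rw [hxn]
            _ = x ^ (m + 1) := by rw [← pow_succ']
        have hne : x ^ (n-1) ≠ 0 := by
          intro h0
          apply hx
          have : x ^ n = x ^ (n-1) * x := by
            rw [← pow_succ]; congr 1; omega
          rw [hxn] at this
          rw [this, h0, zero_mul]
        have h1 : x ^ (n-1) = 1 := hid _ hidem hne
        obtain ⟨m, hm⟩ : ∃ m, n - 1 = m + 1 := ⟨n - 2, by omega⟩
        calc y = 1 * y := (one_mul y).symm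
          _ = x ^ (n-1) * y := by rw [h1]
          _ = x ^ m * (x * y) := by rw [hm, pow_succ, mul_assoc]
          _ = 0 := by rw [hxy, mul_zero]
      have : IsDomain R := NoZeroDivisors.to_isDomain R
      exact (Finite.isDomain_to_isField R).mul_comm a b

end Aux

theorem finite_jacobson_commutative {R : Type*} [Ring R] [Fintype R]
    (h : ∀ x : R, ∃ n : ℕ, 1 < n ∧ x ^ n = x) :
    ∀ a b : R, a * b = b * a :=
  jac_aux (Fintype.card R) R le_rfl h
end

section
/- Let R be an associative ring with unity and n > 1. If a matrix A ∈ Mₙ(R) commutes with every nilpotent matrix in Mₙ(R), then A lies in the center of Mₙ(R); in particular A is a scalar matrix c·I with c in the center of R. -/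
theorem matrix_commuting_with_nilpotents_is_central {R : Type*} [Ring R]
    (n : ℕ) (hn : 1 < n) (A : Matrix (Fin n) (Fin n) R)
    (h : ∀ B : Matrix (Fin n) (Fin n) R, IsNilpotent B → A * B = B * A) :
    A ∈ Subring.center (Matrix (Fin n) (Fin n) R) ∧
      ∃ c ∈ Subring.center R, A = c • (1 : Matrix (Fin n) (Fin n) R) := by
  have hnil : ∀ (i j : Fin n) (r : R), i ≠ j →
      IsNilpotent (Matrix.single i j r) := by
    intro i j r hij
    exact ⟨2, by rw [pow_two, Matrix.single_mul_single_of_ne (c := r) i j i (Ne.symm hij)]⟩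
  obtain ⟨c, hc⟩ := Matrix.mem_range_scalar_of_commute_single
    (fun i j hij => (h _ (hnil i j 1 hij)).symm)
  set i0 : Fin n := ⟨0, by omega⟩
  set j1 : Fin n := ⟨1, hn⟩
  have hij : i0 ≠ j1 := by simp [i0, j1, Fin.ext_iff]
  have hcc : c ∈ Subring.center R := by
    rw [Subring.mem_center_iff]
    intro r
    have := congrFun (congrFun (h _ (hnil i0 j1 r hij)) i0) j1
    rw [← hc] at this
    simpa [Matrix.mul_apply, Matrix.scalar_apply, Matrix.diagonal_apply,
      Matrix.single_apply_of_ne (fun h' => hij h'.1.symm ),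
      Finset.sum_ite_eq, Finset.sum_ite_eq', mul_comm] using this.symm
  have hA : A = c • (1 : Matrix (Fin n) (Fin n) R) := by
    rw [← hc, Matrix.scalar_apply, Matrix.smul_one_eq_diagonal]
  refine ⟨?_, c, hcc, hA⟩
  rw [Subring.mem_center_iff]
  intro B
  rw [hA]
  ext i j
  simp [Matrix.mul_apply, Matrix.smul_apply, Matrix.one_apply, Finset.mul_sum,
    Finset.sum_mul, mul_ite, ite_mul, (Subring.mem_center_iff.mp hcc (B i j))]
end
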